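/- Let G be a finite simple graph on a vertex type V, let d₁, d₂ ≥ 1, let S be a realization of G in dimension d₁ and S' a realization of the same graph G in dimension d₂, let w : V → ℝ be nonnegative weights, and let ρ be a separable state on ℂ^{d₁} ⊗ ℂ^{d₂}. Then ∑_i w i * |tr(ρ * (S i ⊗ S' i))| ≤ max(β_S(w), β_{S'}(w)), where S i ⊗ S' i denotes the Kronecker product. -/

import Mathlib

open Matrix
open scoped ComplexOrder

/-- A realization of the graph `G` in dimension `d`: a family of Hermitian involutions that
anticommute on edges and commute on non-edges. -/
def IsRealization {V : Type*} (G : SimpleGraph V) (d : ℕ)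
    (S : V → Matrix (Fin d) (Fin d) ℂ) : Prop :=
  (∀ i, (S i).IsHermitian) ∧ (∀ i, S i * S i = 1) ∧
    (∀ i j, G.Adj i j → S i * S j = -(S j * S i)) ∧
    (∀ i j, i ≠ j → ¬G.Adj i j → S i * S j = S j * S i)

/-- The (real) expectation value `ψᴴ A ψ` of a matrix `A` at a vector `ψ`. -/
noncomputable def expectation {d : ℕ} (A : Matrix (Fin d) (Fin d) ℂ) (ψ : Fin d → ℂ) : ℝ :=
  (star ψ ⬝ᵥ (A *ᵥ ψ)).re

/-- The beta value of a realization: supremum over unit vectors of the weighted sum of squared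
expectations. -/
noncomputable def betaVal {V : Type*} [Fintype V] {d : ℕ}
    (S : V → Matrix (Fin d) (Fin d) ℂ) (w : V → ℝ) : ℝ :=
  sSup {r : ℝ | ∃ ψ : Fin d → ℂ, star ψ ⬝ᵥ ψ = 1 ∧
    r = ∑ i, w i * (expectation (S i) ψ) ^ 2}

/-- A finite set of vertices is independent if no two of its members are adjacent. -/
def IsIndepSet {V : Type*} (G : SimpleGraph V) (I : Finset V) : Prop :=
  ∀ a ∈ I, ∀ b ∈ I, ¬G.Adj a b

/-- The weighted independence number. -/
noncomputable def alphaW {V : Type*} [Fintype V] (G : SimpleGraph V) (w : V → ℝ) : ℝ :=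
  sSup {r : ℝ | ∃ I : Finset V, IsIndepSet G I ∧ r = ∑ i ∈ I, w i}

/-- A graph is ħ-perfect if for every realization and every nonnegative weight vector the beta
value equals the weighted independence number. -/
def HbarPerfect {V : Type*} [Fintype V] (G : SimpleGraph V) : Prop :=
  ∀ d : ℕ, 1 ≤ d → ∀ S : V → Matrix (Fin d) (Fin d) ℂ, IsRealization G d S →
    ∀ w : V → ℝ, (∀ i, 0 ≤ w i) → betaVal S w = alphaW G w

lemma abs_dot_le_one {d : ℕ} (A : Matrix (Fin d) (Fin d) ℂ) (hA : A.IsHermitian)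
    (hA2 : A * A = 1) (ψ : Fin d → ℂ) (hψ : star ψ ⬝ᵥ ψ = 1) :
    ‖star ψ ⬝ᵥ (A *ᵥ ψ)‖ ≤ 1 := by
  set x : EuclideanSpace ℂ (Fin d) := (WithLp.equiv 2 (Fin d → ℂ)).symm ψ with hx
  set y : EuclideanSpace ℂ (Fin d) := (WithLp.equiv 2 (Fin d → ℂ)).symm (A *ᵥ ψ) with hy
  have hinner : (inner ℂ x y : ℂ) = star ψ ⬝ᵥ (A *ᵥ ψ) := by
    rw [dotProduct_comm]; exact EuclideanSpace.inner_toLp_toLp ψ _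
  have hxx : (inner ℂ x x : ℂ) = 1 := by
    rw [← hψ, dotProduct_comm]; exact EuclideanSpace.inner_toLp_toLp ψ ψ
  have hyy : (inner ℂ y y : ℂ) = 1 := by
    rw [show (inner ℂ y y : ℂ) = star (A *ᵥ ψ) ⬝ᵥ (A *ᵥ ψ) from by
      rw [dotProduct_comm]; exact EuclideanSpace.inner_toLp_toLp _ _, star_mulVec, dotProduct_mulVec,
      vecMul_vecMul, hA.eq, hA2, vecMul_one, hψ]
  have hnx : ‖x‖ = 1 := by
    rw [norm_eq_sqrt_re_inner (𝕜 := ℂ), hxx]; simp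
  have hny : ‖y‖ = 1 := by
    rw [norm_eq_sqrt_re_inner (𝕜 := ℂ), hyy]; simp
  calc ‖star ψ ⬝ᵥ (A *ᵥ ψ)‖ = ‖(inner ℂ x y : ℂ)‖ := by
        rw [hinner]
    _ ≤ ‖x‖ * ‖y‖ := norm_inner_le_norm x y
    _ = 1 := by rw [hnx, hny, mul_one]

lemma trace_mul_im_zero {d : ℕ} {ρ A : Matrix (Fin d) (Fin d) ℂ} (hρ : ρ.IsHermitian)
    (hA : A.IsHermitian) : (ρ * A).trace.im = 0 := by
  rw [← Complex.conj_eq_iff_im]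
  calc (starRingEnd ℂ) (ρ * A).trace = (ρ * A)ᴴ.trace := (trace_conjTranspose _).symm
    _ = (Aᴴ * ρᴴ).trace := by rw [conjTranspose_mul]
    _ = (ρ * A).trace := by rw [hA.eq, hρ.eq, trace_mul_comm]

lemma key_bound {V : Type*} [Fintype V] {d : ℕ}
    (S : V → Matrix (Fin d) (Fin d) ℂ)
    (hherm : ∀ i, (S i).IsHermitian) (hinv : ∀ i, S i * S i = 1)
    (w : V → ℝ) (hw : ∀ i, 0 ≤ w i)
    (ρ : Matrix (Fin d) (Fin d) ℂ) (hρ : ρ.PosSemidef) (ht : ρ.trace = 1) :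
    ∑ i, w i * ((ρ * S i).trace.re) ^ 2 ≤ betaVal S w := by
  have hH : ρ.IsHermitian := hρ.1
  set U : Matrix (Fin d) (Fin d) ℂ := (hH.eigenvectorUnitary : Matrix (Fin d) (Fin d) ℂ) with hUdef
  set lam : Fin d → ℝ := hH.eigenvalues with hlamdef
  have hlam : ∀ k, 0 ≤ lam k := hρ.eigenvalues_nonneg
  have hUU : star U * U = 1 := Unitary.star_mul_self_of_mem hH.eigenvectorUnitary.prop
  set u : Fin d → Fin d → ℂ := fun k a => U a k with hudef
  have hu : ∀ k, star (u k) ⬝ᵥ u k = 1 := by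
    intro k
    have := congrFun (congrFun hUU k) k
    simpa [Matrix.mul_apply, Matrix.one_apply, dotProduct, u] using this
  have htr : ∀ B : Matrix (Fin d) (Fin d) ℂ,
      (ρ * B).trace = ∑ k, (lam k : ℂ) * (star (u k) ⬝ᵥ (B *ᵥ u k)) := by
    intro B
    conv_lhs => rw [hH.spectral_theorem]
    rw [Unitary.conjStarAlgAut_apply, ← hUdef, ← hlamdef]
    rw [mul_assoc (U * diagonal (RCLike.ofReal ∘ lam)) (star U) B, trace_mul_comm,
      ← mul_assoc (star U * B) U (diagonal (RCLike.ofReal ∘ lam))]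
    have hdiag : (star U * B * U * diagonal (RCLike.ofReal ∘ lam)).trace
        = ∑ k, (lam k : ℂ) * (star U * B * U) k k := by
      simp [Matrix.trace, Matrix.mul_diagonal, Matrix.diag, mul_comm, Function.comp]
    rw [hdiag]
    refine Finset.sum_congr rfl fun k _ => ?_
    congr 1
    simp only [Matrix.mul_apply, dotProduct, Matrix.mulVec, Matrix.star_apply, hudef,
      Pi.star_apply, Finset.sum_mul, Finset.mul_sum, dotProduct]
    rw [Finset.sum_comm]
    exact Finset.sum_congr rfl fun a _ => Finset.sum_congr rfl fun b _ => by ring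
  have hre : ∀ i, (ρ * S i).trace.re = ∑ k, lam k * (star (u k) ⬝ᵥ (S i *ᵥ u k)).re := by
    intro i
    rw [htr (S i), Complex.re_sum]
    exact Finset.sum_congr rfl fun k _ => by simp [Complex.mul_re]
  have hsum1 : ∑ k, lam k = 1 := by
    have h2 : ρ.trace = ∑ k, (lam k : ℂ) := by
      conv_lhs => rw [hH.spectral_theorem]
      rw [Unitary.conjStarAlgAut_apply, ← hUdef, ← hlamdef]
      rw [trace_mul_cycle, hUU, one_mul, trace_diagonal]
      simp [Function.comp]
    rw [ht] at h2
    have h3 := congrArg Complex.re h2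
    simpa [Complex.re_sum] using h3.symm
  have hbdd : BddAbove {r : ℝ | ∃ ψ : Fin d → ℂ, star ψ ⬝ᵥ ψ = 1 ∧
      r = ∑ i, w i * (expectation (S i) ψ) ^ 2} := by
    refine ⟨∑ i, w i, ?_⟩
    rintro r ⟨ψ, hψ, rfl⟩
    refine Finset.sum_le_sum fun i _ => ?_
    refine mul_le_of_le_one_right (hw i) ?_
    have h1 : |(star ψ ⬝ᵥ (S i *ᵥ ψ)).re| ≤ 1 :=
      le_trans (Complex.abs_re_le_norm _) (abs_dot_le_one (S i) (hherm i) (hinv i) ψ hψ)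
    calc (expectation (S i) ψ) ^ 2 = |(star ψ ⬝ᵥ (S i *ᵥ ψ)).re| ^ 2 := (sq_abs _).symm
      _ ≤ 1 ^ 2 := by gcongr
      _ = 1 := one_pow 2
  have hmem : ∀ k, ∑ i, w i * ((star (u k) ⬝ᵥ (S i *ᵥ u k)).re) ^ 2 ≤ betaVal S w := fun k =>
    le_csSup hbdd ⟨u k, hu k, rfl⟩
  calc ∑ i, w i * ((ρ * S i).trace.re) ^ 2
      = ∑ i, w i * (∑ k, lam k * (star (u k) ⬝ᵥ (S i *ᵥ u k)).re) ^ 2 := by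
        exact Finset.sum_congr rfl fun i _ => by rw [hre]
    _ ≤ ∑ i, w i * (∑ k, lam k * ((star (u k) ⬝ᵥ (S i *ᵥ u k)).re) ^ 2) := by
        refine Finset.sum_le_sum fun i _ => mul_le_mul_of_nonneg_left ?_ (hw i)
        have hcs := Finset.sum_sq_le_sum_mul_sum_of_sq_eq_mul Finset.univ
          (r := fun k => lam k * (star (u k) ⬝ᵥ (S i *ᵥ u k)).re) (f := lam)
          (g := fun k => lam k * ((star (u k) ⬝ᵥ (S i *ᵥ u k)).re) ^ 2)
          (fun k _ => hlam k) (fun k _ => mul_nonneg (hlam k) (sq_nonneg _))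
          (fun k _ => by ring)
        simpa [hsum1] using hcs
    _ = ∑ k, lam k * ∑ i, w i * ((star (u k) ⬝ᵥ (S i *ᵥ u k)).re) ^ 2 := by
        simp_rw [Finset.mul_sum]
        rw [Finset.sum_comm]
        exact Finset.sum_congr rfl fun k _ => Finset.sum_congr rfl fun i _ => by ring
    _ ≤ ∑ k, lam k * betaVal S w :=
        Finset.sum_le_sum fun k _ => mul_le_mul_of_nonneg_left (hmem k) (hlam k)
    _ = betaVal S w := by rw [← Finset.sum_mul, hsum1, one_mul]

open Kronecker in
/-- For two realizations S, S' of the same graph and any separable bipartite state ρ, the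
weighted sum of absolute correlations is bounded by the larger of the two beta values. -/
theorem stmt_15 {V : Type*} [Fintype V] (G : SimpleGraph V) (d₁ d₂ : ℕ)
    (h₁ : 1 ≤ d₁) (h₂ : 1 ≤ d₂)
    (S : V → Matrix (Fin d₁) (Fin d₁) ℂ) (hS : IsRealization G d₁ S)
    (S' : V → Matrix (Fin d₂) (Fin d₂) ℂ) (hS' : IsRealization G d₂ S')
    (w : V → ℝ) (hw : ∀ i, 0 ≤ w i)
    (ρ : Matrix (Fin d₁ × Fin d₂) (Fin d₁ × Fin d₂) ℂ)
    (hsep : ∃ (k : ℕ) (c : Fin k → ℝ) (ρ₁ : Fin k → Matrix (Fin d₁) (Fin d₁) ℂ)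
        (ρ₂ : Fin k → Matrix (Fin d₂) (Fin d₂) ℂ),
        (∀ j, 0 ≤ c j) ∧ (∑ j, c j) = 1 ∧
        (∀ j, (ρ₁ j).PosSemidef ∧ (ρ₁ j).trace = 1) ∧
        (∀ j, (ρ₂ j).PosSemidef ∧ (ρ₂ j).trace = 1) ∧
        ρ = ∑ j, (c j : ℂ) • (ρ₁ j ⊗ₖ ρ₂ j)) :
    ∑ i, w i * ‖(ρ * (S i ⊗ₖ S' i)).trace‖ ≤
      max (betaVal S w) (betaVal S' w) := by
  obtain ⟨k, c, ρ₁, ρ₂, hc, hc1, hρ₁, hρ₂, hρeq⟩ := hsep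
  set a : V → Fin k → ℝ := fun i j => ((ρ₁ j * S i).trace).re with ha
  set b : V → Fin k → ℝ := fun i j => ((ρ₂ j * S' i).trace).re with hb
  have hA : ∀ i j, (ρ₁ j * S i).trace = ((a i j : ℝ) : ℂ) := by
    intro i j
    have him := trace_mul_im_zero (hρ₁ j).1.1 (hS.1 i)
    exact Complex.ext (by simp [a]) (by simp [him])
  have hB : ∀ i j, (ρ₂ j * S' i).trace = ((b i j : ℝ) : ℂ) := by
    intro i j
    have him := trace_mul_im_zero (hρ₂ j).1.1 (hS'.1 i)
    exact Complex.ext (by simp [b]) (by simp [him])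
  have htrace : ∀ i, (ρ * (S i ⊗ₖ S' i)).trace
      = ∑ j, (c j : ℂ) * ((ρ₁ j * S i).trace * (ρ₂ j * S' i).trace) := by
    intro i
    rw [hρeq, Finset.sum_mul, trace_sum]
    refine Finset.sum_congr rfl fun j _ => ?_
    rw [smul_mul_assoc, trace_smul, ← mul_kronecker_mul, trace_kronecker]
    simp [smul_eq_mul]
  have habs : ∀ i, ‖(ρ * (S i ⊗ₖ S' i)).trace‖ ≤ ∑ j, c j * (|a i j| * |b i j|) := by
    intro i
    rw [htrace i]
    refine le_trans (norm_sum_le _ _) (le_of_eq ?_)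
    refine Finset.sum_congr rfl fun j _ => ?_
    rw [hA, hB]
    simp [norm_mul, Complex.norm_real, Real.norm_eq_abs, abs_of_nonneg (hc j), mul_assoc]
  have hkey₁ : ∀ j, ∑ i, w i * (a i j) ^ 2 ≤ betaVal S w := fun j =>
    key_bound S hS.1 hS.2.1 w hw (ρ₁ j) (hρ₁ j).1 (hρ₁ j).2
  have hkey₂ : ∀ j, ∑ i, w i * (b i j) ^ 2 ≤ betaVal S' w := fun j =>
    key_bound S' hS'.1 hS'.2.1 w hw (ρ₂ j) (hρ₂ j).1 (hρ₂ j).2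
  have h1 : ∑ j, c j * ∑ i, w i * (a i j) ^ 2 ≤ betaVal S w := by
    calc ∑ j, c j * ∑ i, w i * (a i j) ^ 2 ≤ ∑ j, c j * betaVal S w :=
          Finset.sum_le_sum fun j _ => mul_le_mul_of_nonneg_left (hkey₁ j) (hc j)
      _ = betaVal S w := by rw [← Finset.sum_mul, hc1, one_mul]
  have h2 : ∑ j, c j * ∑ i, w i * (b i j) ^ 2 ≤ betaVal S' w := by
    calc ∑ j, c j * ∑ i, w i * (b i j) ^ 2 ≤ ∑ j, c j * betaVal S' w :=
          Finset.sum_le_sum fun j _ => mul_le_mul_of_nonneg_left (hkey₂ j) (hc j)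
      _ = betaVal S' w := by rw [← Finset.sum_mul, hc1, one_mul]
  calc ∑ i, w i * ‖(ρ * (S i ⊗ₖ S' i)).trace‖
      ≤ ∑ i, w i * ∑ j, c j * (|a i j| * |b i j|) :=
        Finset.sum_le_sum fun i _ => mul_le_mul_of_nonneg_left (habs i) (hw i)
    _ ≤ ∑ i, w i * ∑ j, c j * (((a i j) ^ 2 + (b i j) ^ 2) / 2) := by
        refine Finset.sum_le_sum fun i _ => mul_le_mul_of_nonneg_left
          (Finset.sum_le_sum fun j _ => mul_le_mul_of_nonneg_left ?_ (hc j)) (hw i)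
        nlinarith [sq_nonneg (|a i j| - |b i j|), sq_abs (a i j), sq_abs (b i j),
          abs_nonneg (a i j), abs_nonneg (b i j)]
    _ = (1 / 2) * (∑ j, c j * ∑ i, w i * (a i j) ^ 2)
        + (1 / 2) * (∑ j, c j * ∑ i, w i * (b i j) ^ 2) := by
        simp_rw [Finset.mul_sum]
        rw [Finset.sum_comm, ← Finset.sum_add_distrib]
        refine Finset.sum_congr rfl fun j _ => ?_
        rw [← Finset.sum_add_distrib]
        refine Finset.sum_congr rfl fun i _ => by ring
    _ ≤ (1 / 2) * betaVal S w + (1 / 2) * betaVal S' w := by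
        have := h1; have := h2; gcongr <;> norm_num
    _ ≤ max (betaVal S w) (betaVal S' w) := by
        have hm1 := le_max_left (betaVal S w) (betaVal S' w)
        have hm2 := le_max_right (betaVal S w) (betaVal S' w)
        linarith
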